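/- Every Cohen–Macaulay simplicial complex (over any field or ℤ) is pure and is a chamber complex (i.e., strongly connected). -/

import Mathlib

open scoped ContinuousMap Pointwise

set_option maxHeartbeats 1000000
set_option synthInstance.maxHeartbeats 1000000

universe u v

/-- An abstract simplicial complex on a vertex type `V`. -/
structure AbsSimplicialComplex (V : Type u) where
  faces : Set (Finset V)
  nonempty_of_mem : ∀ {s : Finset V}, s ∈ faces → s.Nonempty
  down_closed : ∀ {s t : Finset V}, s ∈ faces → t ⊆ s → t.Nonempty → t ∈ faces

namespace AbsSimplicialComplex

variable {V : Type u}

/-- The vertices of an abstract simplicial complex. -/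
def vertices (X : AbsSimplicialComplex V) : Set V := {v | {v} ∈ X.faces}

/-- `X` has dimension `d`. -/
def Dim (X : AbsSimplicialComplex V) (d : ℕ) : Prop :=
  (∀ s ∈ X.faces, s.card ≤ d + 1) ∧ ∃ s ∈ X.faces, s.card = d + 1

/-- A facet is a maximal simplex. -/
def IsFacet (X : AbsSimplicialComplex V) (s : Finset V) : Prop :=
  s ∈ X.faces ∧ ∀ t ∈ X.faces, s ⊆ t → t = s

/-- A complex is pure of dimension `d` if all its facets have dimension `d`. -/
def IsPure (X : AbsSimplicialComplex V) (d : ℕ) : Prop :=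
  (∀ s ∈ X.faces, s.card ≤ d + 1) ∧ ∀ s, X.IsFacet s → s.card = d + 1

/-- The link of a simplex `σ`. -/
def link [DecidableEq V] (X : AbsSimplicialComplex V) (σ : Finset V) :
    AbsSimplicialComplex V where
  faces := {t | Disjoint t σ ∧ t ∪ σ ∈ X.faces ∧ t.Nonempty}
  nonempty_of_mem h := h.2.2
  down_closed := by
    rintro s t ⟨hd, hu, -⟩ hts htne
    refine ⟨Finset.disjoint_of_subset_left hts hd, ?_, htne⟩
    exact X.down_closed hu (Finset.union_subset_union_left hts)
      ⟨htne.choose, Finset.mem_union_left _ htne.choose_spec⟩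

/-- The geometric realisation of an abstract simplicial complex, as the set of
convex-combination functions supported on a face. -/
abbrev geomReal (X : AbsSimplicialComplex V) : Type u :=
  {f : V → ℝ // ∃ s ∈ X.faces, (∀ v ∉ s, f v = 0) ∧ (∀ v, 0 ≤ f v) ∧ ∑ v ∈ s, f v = 1}

/-- The support of a point of the geometric realisation. -/
def ptSupport {X : AbsSimplicialComplex V} (p : geomReal X) : Set V := {v | p.1 v ≠ 0}

/-- The complement `|X| \ |X^{(s)}|` of the `s`-skeleton in the geometric realisation:
the points whose open simplex has dimension `> s`. -/
abbrev complementSkeleton (X : AbsSimplicialComplex V) (s : ℤ) : Type u :=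
  {p : geomReal X // s + 2 ≤ (Set.ncard (ptSupport p) : ℤ)}

/-- The barycentric subdivision: simplices are chains of faces of `X`. -/
def barySubdiv (X : AbsSimplicialComplex V) : AbsSimplicialComplex (Finset V) where
  faces := {c | c.Nonempty ∧ (∀ s ∈ c, s ∈ X.faces) ∧ IsChain (· ⊆ ·) (c : Set (Finset V))}
  nonempty_of_mem h := h.1
  down_closed := by
    rintro c d ⟨-, hmem, hchain⟩ hdc hdne
    exact ⟨hdne, fun s hs => hmem s (hdc hs), IsChain.mono (Finset.coe_subset.mpr hdc) hchain⟩

/-- Two facets are adjacent if they intersect in a codimension-one face. -/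
def Adjacent [DecidableEq V] (X : AbsSimplicialComplex V) (s t : Finset V) : Prop :=
  X.IsFacet s ∧ X.IsFacet t ∧ s ≠ t ∧ (s ∩ t).card + 1 = s.card

/-- A chamber complex: any two facets are connected by a gallery. -/
def IsChamberComplex [DecidableEq V] (X : AbsSimplicialComplex V) : Prop :=
  ∀ s t, X.IsFacet s → X.IsFacet t → Relation.ReflTransGen X.Adjacent s t

/-- The chamber graph of a complex, as a 1-dimensional simplicial complex. -/
def chamberGraph [DecidableEq V] (X : AbsSimplicialComplex V) :
    AbsSimplicialComplex (Finset V) where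
  faces := {p | p.Nonempty ∧ p.card ≤ 2 ∧ (∀ F ∈ p, X.IsFacet F) ∧
      ∀ F ∈ p, ∀ F' ∈ p, F = F' ∨ X.Adjacent F F'}
  nonempty_of_mem h := h.1
  down_closed := by
    rintro p q ⟨-, hcard, hfac, hadj⟩ hqp hqne
    exact ⟨hqne, le_trans (Finset.card_le_card hqp) hcard,
      fun F hF => hfac F (hqp hF), fun F hF F' hF' => hadj F (hqp hF) F' (hqp hF')⟩

end AbsSimplicialComplex

open AbsSimplicialComplex

/-- `n`-connectedness of a topological space (`n = -1` meaning nonempty). -/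
def IsNConnectedSpace (X : Type*) [TopologicalSpace X] (n : ℤ) : Prop :=
  (-1 ≤ n → Nonempty X) ∧
    ∀ k : ℕ, (k : ℤ) ≤ n → ∀ x : X, Subsingleton (HomotopyGroup (Fin k) X x)

/-- The basepoint of the `n`-sphere. -/
noncomputable def spherePoint (n : ℕ) :
    Metric.sphere (0 : EuclideanSpace ℝ (Fin (n + 1))) 1 :=
  ⟨EuclideanSpace.single 0 1, by simp⟩

/-- The wedge of a family of `n`-spheres indexed by `ι` (a point if `ι` is empty). -/
def WedgeOfSpheres (ι : Type) (n : ℕ) : Type :=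
  Quotient (Relation.EqvGen.setoid
    (fun (a b : (Σ _ : ι, Metric.sphere (0 : EuclideanSpace ℝ (Fin (n + 1))) 1) ⊕ Unit) =>
      ∃ i, a = Sum.inl ⟨i, spherePoint n⟩ ∧ b = Sum.inr ()))

noncomputable instance (ι : Type) (n : ℕ) : TopologicalSpace (WedgeOfSpheres ι n) :=
  inferInstanceAs (TopologicalSpace (Quotient _))

/-- A space is `m`-spherical if it is homotopy equivalent to a wedge of `m`-spheres. -/
def IsSpherical (m : ℕ) (X : Type*) [TopologicalSpace X] : Prop :=
  ∃ ι : Type, Nonempty (X ≃ₕ WedgeOfSpheres ι m)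

namespace AbsSimplicialComplex

variable {V : Type u}

/-- Ordered simplices: tuples of vertices spanning a face. -/
def OrderedSimplex [DecidableEq V] (X : AbsSimplicialComplex V) (n : ℕ) : Type u :=
  {σ : Fin (n + 1) → V // Finset.image σ Finset.univ ∈ X.faces}

/-- The simplicial `n`-chains with coefficients in `R`. -/
abbrev Chains (R : Type v) [CommRing R] [DecidableEq V] (X : AbsSimplicialComplex V)
    (n : ℕ) : Type (max u v) := OrderedSimplex X n →₀ R

/-- The `i`-th face of an ordered simplex. -/
def faceMap [DecidableEq V] {X : AbsSimplicialComplex V} {n : ℕ}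
    (σ : OrderedSimplex X (n + 1)) (i : Fin (n + 2)) : OrderedSimplex X n :=
  ⟨σ.1 ∘ i.succAbove, by
    refine X.down_closed σ.2 ?_ (Finset.univ_nonempty.image _)
    intro v hv
    simp only [Finset.mem_image, Function.comp_apply] at hv ⊢
    obtain ⟨j, -, rfl⟩ := hv
    exact ⟨i.succAbove j, Finset.mem_univ _, rfl⟩⟩

/-- The simplicial boundary map. -/
noncomputable def boundary (R : Type*) [CommRing R] [DecidableEq V]
    (X : AbsSimplicialComplex V) (n : ℕ) : Chains R X (n + 1) →ₗ[R] Chains R X n :=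
  Finsupp.lsum R fun σ => LinearMap.toSpanSingleton R _
    (∑ i : Fin (n + 2), ((-1 : R) ^ (i : ℕ)) • Finsupp.single (faceMap σ i) (1 : R))

/-- The augmentation map. -/
noncomputable def augmentation (R : Type*) [CommRing R] [DecidableEq V]
    (X : AbsSimplicialComplex V) : Chains R X 0 →ₗ[R] R :=
  Finsupp.lsum R fun _ => LinearMap.id

/-- Quotient `ker f / (im g ∩ ker f)`, used to define homology. -/
noncomputable def homologyOf {R M N P : Type*} [CommRing R] [AddCommGroup M]
    [AddCommGroup N] [AddCommGroup P] [Module R M] [Module R N] [Module R P]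
    (f : M →ₗ[R] P) (g : N →ₗ[R] M) : Type _ :=
  LinearMap.ker f ⧸ Submodule.comap (LinearMap.ker f).subtype (LinearMap.range g)

/-- Reduced simplicial homology of `X` with coefficients in `R`. -/
noncomputable def reducedHomology (R : Type v) [CommRing R] [DecidableEq V]
    (X : AbsSimplicialComplex V) : ℕ → Type _
  | 0 => homologyOf (augmentation R X) (boundary R X 0)
  | (n + 1) => homologyOf (boundary R X n) (boundary R X (n + 1))

/-- `X` is `m`-acyclic over `R`: reduced homology vanishes in degrees `≤ m`
(and `X` is nonempty if `m ≥ -1`). -/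
def IsAcyclicTo (R : Type*) [CommRing R] [DecidableEq V] (X : AbsSimplicialComplex V)
    (m : ℤ) : Prop :=
  (-1 ≤ m → X.faces.Nonempty) ∧
    ∀ i : ℕ, (i : ℤ) ≤ m → Subsingleton (reducedHomology R X i)

/-- `X` is Cohen–Macaulay over `R`. -/
def IsCM (R : Type*) [CommRing R] [DecidableEq V] (X : AbsSimplicialComplex V)
    (d : ℕ) : Prop :=
  X.Dim d ∧ IsAcyclicTo R X ((d : ℤ) - 1) ∧
    ∀ σ ∈ X.faces, IsAcyclicTo R (X.link σ) ((d : ℤ) - σ.card - 1)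

/-- `X` is homotopy Cohen–Macaulay. -/
def IsHCM [DecidableEq V] (X : AbsSimplicialComplex V) (d : ℕ) : Prop :=
  X.Dim d ∧ IsNConnectedSpace (geomReal X) ((d : ℤ) - 1) ∧
    ∀ σ ∈ X.faces, IsNConnectedSpace (geomReal (X.link σ)) ((d : ℤ) - σ.card - 1)

end AbsSimplicialComplex

/-- The coset complex `CC(G, H)`: the nerve of the covering of `G` by the
left cosets of the subgroups in the family `H`. -/
def cosetComplex (G : Type*) [Group G] (H : Set (Subgroup G)) :
    AbsSimplicialComplex (Set G) where
  faces := {s | s.Nonempty ∧ (∀ A ∈ s, ∃ g : G, ∃ K ∈ H, A = g • (K : Set G)) ∧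
      (⋂ A ∈ s, (A : Set G)).Nonempty}
  nonempty_of_mem h := h.1
  down_closed := by
    rintro s t ⟨-, hco, ⟨x, hx⟩⟩ hts htne
    refine ⟨htne, fun A hA => hco A (hts hA), ⟨x, ?_⟩⟩
    simp only [Set.mem_iInter] at hx ⊢
    exact fun A hA => hx A (hts hA)



section Proofs

open Relation Finset

namespace AbsSimplicialComplex

variable {V : Type u} [DecidableEq V]

lemma ext_faces {X Y : AbsSimplicialComplex V} (h : X.faces = Y.faces) : X = Y := by
  cases X; cases Y; simpa using h

lemma exists_facet_ge {X : AbsSimplicialComplex V} {d : ℕ}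
    (hb : ∀ s ∈ X.faces, s.card ≤ d + 1) {σ : Finset V} (hσ : σ ∈ X.faces) :
    ∃ F, X.IsFacet F ∧ σ ⊆ F := by
  have key : ∀ n (σ : Finset V), σ ∈ X.faces → d + 1 - σ.card ≤ n →
      ∃ F, X.IsFacet F ∧ σ ⊆ F := by
    intro n
    induction n with
    | zero =>
      intro σ hσ hn
      refine ⟨σ, ⟨hσ, fun t ht hst => ?_⟩, subset_rfl⟩
      exact (Finset.eq_of_subset_of_card_le hst (by have := hb t ht; have := hb σ hσ; omega)).symm
    | succ n ih =>
      intro σ hσ hn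
      by_cases hfac : ∀ t ∈ X.faces, σ ⊆ t → t = σ
      · exact ⟨σ, ⟨hσ, hfac⟩, subset_rfl⟩
      · push_neg at hfac
        obtain ⟨t, ht, hst, hne⟩ := hfac
        have hlt : σ.card < t.card :=
          Finset.card_lt_card (lt_of_le_of_ne hst (fun h => hne h.symm))
        obtain ⟨F, hF, htF⟩ := ih t ht (by have := hb t ht; omega)
        exact ⟨F, hF, hst.trans htF⟩
  exact key (d + 1) σ hσ (by omega)

lemma isPure_of_CM {R : Type} [CommRing R] {X : AbsSimplicialComplex V} {d : ℕ}
    (hCM : IsCM R X d) : X.IsPure d := by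
  obtain ⟨⟨hb, -⟩, -, hlink⟩ := hCM
  refine ⟨hb, fun s hs => ?_⟩
  have h1 := hb s hs.1
  by_contra hne
  have hle : s.card ≤ d := by omega
  have hm : (-1 : ℤ) ≤ (d : ℤ) - s.card - 1 := by push_cast; omega
  obtain ⟨t, hdisj, hu, htne⟩ := (hlink s hs.1).1 hm
  have heq : t ∪ s = s := hs.2 _ hu Finset.subset_union_right
  obtain ⟨x, hx⟩ := htne
  have hxs : x ∈ s := heq ▸ Finset.mem_union_left s hx
  exact Finset.disjoint_left.mp hdisj hx hxs

lemma link_link {X : AbsSimplicialComplex V} {v : V} {τ : Finset V}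
    (hτ : Disjoint τ {v}) : (X.link {v}).link τ = X.link (τ ∪ {v}) := by
  apply ext_faces
  ext s
  simp only [link, Set.mem_setOf_eq]
  constructor
  · rintro ⟨h1, ⟨h2, h3, -⟩, h5⟩
    rw [Finset.disjoint_union_left] at h2
    refine ⟨by rw [Finset.disjoint_union_right]; exact ⟨h1, h2.1⟩, ?_, h5⟩
    rwa [← Finset.union_assoc]
  · rintro ⟨h1, h3, h5⟩
    rw [Finset.disjoint_union_right] at h1
    refine ⟨h1.1, ⟨by rw [Finset.disjoint_union_left]; exact ⟨h1.2, hτ⟩, ?_,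
      h5.mono Finset.subset_union_left⟩, h5⟩
    rwa [Finset.union_assoc]

lemma link_isCM {R : Type} [CommRing R] {X : AbsSimplicialComplex V} {d : ℕ}
    (hCM : IsCM R X (d + 1)) {v : V} (hv : {v} ∈ X.faces) :
    IsCM R (X.link {v}) d := by
  have hpure := isPure_of_CM (R := R) hCM
  obtain ⟨⟨hb, hex⟩, hac, hlink⟩ := hCM
  refine ⟨⟨?_, ?_⟩, ?_, ?_⟩
  · rintro t ⟨hd, hu, -⟩
    have := hb _ hu
    have hcard : (t ∪ {v}).card = t.card + 1 := by
      rw [Finset.card_union_of_disjoint hd]; simp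
    omega
  · obtain ⟨F, hF, hvF⟩ := exists_facet_ge hb hv
    have hcF : F.card = d + 2 := hpure.2 F hF
    have hvmem : v ∈ F := hvF (Finset.mem_singleton_self v)
    have hsub : ({v} : Finset V) ⊆ F := Finset.singleton_subset_iff.mpr hvmem
    have hcard : (F \ {v}).card = d + 1 := by
      rw [Finset.card_sdiff_of_subset hsub]; simp [hcF]
    refine ⟨F \ {v}, ⟨Finset.sdiff_disjoint, ?_, ?_⟩, hcard⟩
    · rw [Finset.sdiff_union_of_subset hsub]; exact hF.1
    · rw [← Finset.card_pos, hcard]; omega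
  · have h := hlink {v} hv
    have : ((d : ℤ) + 1) - ({v} : Finset V).card - 1 = (d : ℤ) - 1 := by
      simp
    rw [show (((d : ℕ) + 1 : ℕ) : ℤ) - (({v} : Finset V).card : ℤ) - 1 = (d : ℤ) - 1 by
      push_cast; simp] at h
    exact h
  · rintro τ ⟨hdisj, hu, hne⟩
    rw [link_link hdisj]
    have h := hlink (τ ∪ {v}) hu
    have hcard : (τ ∪ {v}).card = τ.card + 1 := by
      rw [Finset.card_union_of_disjoint hdisj]; simp
    rw [show (((d : ℕ) + 1 : ℕ) : ℤ) - (((τ ∪ {v}) : Finset V).card : ℤ) - 1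
        = (d : ℤ) - (τ.card : ℤ) - 1 by rw [hcard]; push_cast; ring] at h
    exact h

lemma facet_sdiff {X : AbsSimplicialComplex V} {v : V} {F : Finset V}
    (hF : X.IsFacet F) (hv : v ∈ F) (h2 : 2 ≤ F.card) :
    (X.link {v}).IsFacet (F \ {v}) := by
  have hsub : ({v} : Finset V) ⊆ F := Finset.singleton_subset_iff.mpr hv
  constructor
  · refine ⟨Finset.sdiff_disjoint, ?_, ?_⟩
    · rw [Finset.sdiff_union_of_subset hsub]; exact hF.1
    · rw [← Finset.card_pos, Finset.card_sdiff_of_subset hsub]; simp; omega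
  · rintro t ⟨hd, hu, -⟩ hsubt
    have hFt : F ⊆ t ∪ {v} := by
      intro x hx
      by_cases hxv : x = v
      · simp [hxv]
      · exact Finset.mem_union_left _ (hsubt (Finset.mem_sdiff.mpr ⟨hx, by simp [hxv]⟩))
    have heq : t ∪ {v} = F := hF.2 _ hu hFt
    rw [← heq, Finset.union_sdiff_cancel_right hd]

lemma facet_union {X : AbsSimplicialComplex V} {v : V} {A : Finset V}
    (hA : (X.link {v}).IsFacet A) : X.IsFacet (A ∪ {v}) := by
  obtain ⟨⟨hd, hu, hne⟩, hmax⟩ := hA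
  constructor
  · exact hu
  · intro t ht hsub
    have hvt : v ∈ t := hsub (Finset.mem_union_right _ (Finset.mem_singleton_self v))
    have hAt : A ⊆ t \ {v} := by
      intro x hx
      refine Finset.mem_sdiff.mpr ⟨hsub (Finset.mem_union_left _ hx), ?_⟩
      simp only [Finset.mem_singleton]
      exact fun h => Finset.disjoint_left.mp hd hx (h ▸ Finset.mem_singleton_self v)
    have hmem : t \ {v} ∈ (X.link {v}).faces := by
      refine ⟨Finset.sdiff_disjoint, ?_, hne.mono hAt⟩
      rw [Finset.sdiff_union_of_subset (Finset.singleton_subset_iff.mpr hvt)]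
      exact ht
    have heq : t \ {v} = A := hmax _ hmem hAt
    rw [← heq, Finset.sdiff_union_of_subset (Finset.singleton_subset_iff.mpr hvt)]

lemma adjacent_union {X : AbsSimplicialComplex V} {v : V} {A B : Finset V}
    (h : (X.link {v}).Adjacent A B) : X.Adjacent (A ∪ {v}) (B ∪ {v}) := by
  obtain ⟨hA, hB, hne, hcard⟩ := h
  have hdA : Disjoint A ({v} : Finset V) := hA.1.1
  have hdB : Disjoint B ({v} : Finset V) := hB.1.1
  refine ⟨facet_union hA, facet_union hB, ?_, ?_⟩
  · intro heq
    apply hne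
    have : (A ∪ {v}) \ {v} = (B ∪ {v}) \ {v} := by rw [heq]
    rwa [Finset.union_sdiff_cancel_right hdA, Finset.union_sdiff_cancel_right hdB] at this
  · have hinter : (A ∪ {v}) ∩ (B ∪ {v}) = (A ∩ B) ∪ {v} := by
      ext x; simp only [Finset.mem_inter, Finset.mem_union]; tauto
    have hvAB : Disjoint (A ∩ B) ({v} : Finset V) :=
      Finset.disjoint_of_subset_left Finset.inter_subset_left hdA
    rw [hinter, Finset.card_union_of_disjoint hvAB,
      Finset.card_union_of_disjoint hdA]
    simp only [Finset.card_singleton]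
    omega

lemma conn_of_H0 {R : Type} [CommRing R] [Nontrivial R] {X : AbsSimplicialComplex V}
    (h0 : Subsingleton (reducedHomology R X 0)) {v w : V}
    (hv : {v} ∈ X.faces) (hw : {w} ∈ X.faces) :
    Relation.ReflTransGen (fun a b => ({a, b} : Finset V) ∈ X.faces) v w := by
  classical
  set E : V → V → Prop := fun a b => ({a, b} : Finset V) ∈ X.faces with hE
  have hEsymm : Symmetric E := by
    intro a b h
    simpa only [hE, Finset.pair_comm] using h
  set C : V → V → Prop := Relation.ReflTransGen E with hC
  -- vertices as ordered 0-simplices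
  have himg : ∀ a : V, Finset.image (fun _ : Fin 1 => a) Finset.univ = {a} :=
    fun a => Finset.image_const Finset.univ_nonempty a
  let σ : ∀ a : V, ({a} : Finset V) ∈ X.faces → OrderedSimplex X 0 :=
    fun a ha => ⟨fun _ => a, by rw [himg]; exact ha⟩
  set c : Chains R X 0 := Finsupp.single (σ v hv) 1 - Finsupp.single (σ w hw) 1 with hc
  have hker : c ∈ LinearMap.ker (augmentation R X) := by
    rw [LinearMap.mem_ker, hc, map_sub]
    simp [augmentation, Finsupp.lsum_single]
  -- c is a boundary
  have hmem : c ∈ LinearMap.range (boundary R X 0) := by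
    simp only [reducedHomology] at h0
    unfold homologyOf at h0
    have e1 := @Subsingleton.elim _ h0 (Submodule.Quotient.mk ⟨c, hker⟩) 0
    rw [Submodule.Quotient.mk_eq_zero, Submodule.mem_comap] at e1
    simpa using e1
  obtain ⟨b, hb⟩ := hmem
  -- the indicator functional
  set ind : OrderedSimplex X 0 → R := fun τ => if C (τ.1 0) v then 1 else 0 with hind
  set φ : Chains R X 0 →ₗ[R] R :=
    Finsupp.lsum R fun τ => ind τ • (LinearMap.id : R →ₗ[R] R) with hφ
  have hφsingle : ∀ (τ : OrderedSimplex X 0) (r : R), φ (Finsupp.single τ r) = ind τ * r := by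
    intro τ r
    rw [hφ, Finsupp.lsum_single]
    simp [smul_eq_mul]
  -- the two faces of a 1-simplex are connected
  have hstep : ∀ τ : OrderedSimplex X 1, ind (faceMap τ 0) = ind (faceMap τ 1) := by
    intro τ
    have h0' : (faceMap τ 0).1 0 = τ.1 1 := by
      show τ.1 ((0 : Fin 2).succAbove 0) = τ.1 1
      norm_num [Fin.succAbove]
    have h1' : (faceMap τ 1).1 0 = τ.1 0 := by
      show τ.1 ((1 : Fin 2).succAbove 0) = τ.1 0
      norm_num [Fin.succAbove]
    have hedge : E (τ.1 0) (τ.1 1) := by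
      have himg2 : Finset.image τ.1 Finset.univ = {τ.1 0, τ.1 1} := by
        apply Finset.Subset.antisymm
        · intro a ha
          obtain ⟨i, -, rfl⟩ := Finset.mem_image.mp ha
          fin_cases i <;> simp
        · intro a ha
          rcases Finset.mem_insert.mp ha with h | h
          · exact Finset.mem_image.mpr ⟨0, Finset.mem_univ _, h.symm⟩
          · exact Finset.mem_image.mpr ⟨1, Finset.mem_univ _, (Finset.mem_singleton.mp h).symm⟩
      show ({τ.1 0, τ.1 1} : Finset V) ∈ X.faces
      rw [← himg2]
      exact τ.2
    have hiff : C ((faceMap τ 0).1 0) v ↔ C ((faceMap τ 1).1 0) v := by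
      rw [h0', h1']
      constructor
      · intro h; exact Relation.ReflTransGen.head hedge h
      · intro h; exact Relation.ReflTransGen.head (hEsymm hedge) h
    rw [hind]
    simp only
    rw [if_congr hiff rfl rfl]
  -- φ kills boundaries
  have hφbd : φ.comp (boundary R X 0) = 0 := by
    apply Finsupp.lhom_ext
    intro τ r
    simp only [LinearMap.comp_apply, LinearMap.zero_apply]
    rw [boundary, Finsupp.lsum_single, LinearMap.toSpanSingleton_apply]
    rw [map_smul, map_sum]
    have : ∀ i : Fin 2, φ (((-1 : R) ^ (i : ℕ)) • Finsupp.single (faceMap τ i) (1 : R))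
        = ((-1 : R) ^ (i : ℕ)) * ind (faceMap τ i) := by
      intro i
      rw [map_smul, hφsingle, smul_eq_mul, mul_one]
    rw [Fin.sum_univ_two, this 0, this 1, hstep τ]
    simp
  have hφc : φ c = 0 := by
    rw [← hb]
    have := LinearMap.congr_fun hφbd b
    simpa using this
  rw [hc, map_sub, hφsingle, hφsingle, mul_one, mul_one] at hφc
  have hindv : ind (σ v hv) = 1 := by
    rw [hind]; simp only
    rw [if_pos]
    exact Relation.ReflTransGen.refl
  rw [hindv] at hφc
  by_cases hCwv : C ((σ w hw).1 0) v
  · exact (haveI : Std.Symm E := ⟨hEsymm⟩; Std.Symm.symm _ _ hCwv)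
  · exfalso
    rw [hind] at hφc
    simp only [if_neg hCwv, sub_zero] at hφc
    exact one_ne_zero hφc

lemma chamber_of_CM {R : Type} [CommRing R] [Nontrivial R] :
    ∀ (d : ℕ) (X : AbsSimplicialComplex V), IsCM R X d → X.IsChamberComplex := by
  intro d
  induction d with
  | zero =>
    intro X hCM s t hs ht
    have hp := isPure_of_CM (R := R) hCM
    obtain ⟨a, rfl⟩ := Finset.card_eq_one.mp (hp.2 s hs)
    obtain ⟨b, rfl⟩ := Finset.card_eq_one.mp (hp.2 t ht)
    by_cases hab : a = b
    · subst hab; exact Relation.ReflTransGen.refl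
    · refine Relation.ReflTransGen.single ⟨hs, ht, by simpa using hab, ?_⟩
      rw [Finset.singleton_inter_of_notMem (by simpa using hab)]
      simp
  | succ d ih =>
    intro X hCM F G hF hG
    have hpure := isPure_of_CM (R := R) hCM
    -- facets sharing a vertex are in the same gallery
    have hsv : ∀ F G : Finset V, X.IsFacet F → X.IsFacet G → ∀ v, v ∈ F → v ∈ G →
        Relation.ReflTransGen X.Adjacent F G := by
      intro F G hF hG v hvF hvG
      have hvface : {v} ∈ X.faces :=
        X.down_closed hF.1 (Finset.singleton_subset_iff.mpr hvF) ⟨v, Finset.mem_singleton_self v⟩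
      have hlCM := link_isCM (R := R) hCM hvface
      have h2F : 2 ≤ F.card := by rw [hpure.2 F hF]; omega
      have h2G : 2 ≤ G.card := by rw [hpure.2 G hG]; omega
      have hgal := ih (X.link {v}) hlCM (F \ {v}) (G \ {v})
        (facet_sdiff hF hvF h2F) (facet_sdiff hG hvG h2G)
      have hlift : Relation.ReflTransGen X.Adjacent (F \ {v} ∪ {v}) (G \ {v} ∪ {v}) :=
        Relation.ReflTransGen.lift (fun A => A ∪ {v})
        (fun A B h => adjacent_union h) _ _ hgal
      simpa only [Finset.sdiff_union_of_subset (Finset.singleton_subset_iff.mpr hvF),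
        Finset.sdiff_union_of_subset (Finset.singleton_subset_iff.mpr hvG)] using hlift
    obtain ⟨v, hv⟩ := X.nonempty_of_mem hF.1
    obtain ⟨w, hw⟩ := X.nonempty_of_mem hG.1
    have hvf : {v} ∈ X.faces :=
      X.down_closed hF.1 (Finset.singleton_subset_iff.mpr hv) ⟨v, Finset.mem_singleton_self v⟩
    have hwf : {w} ∈ X.faces :=
      X.down_closed hG.1 (Finset.singleton_subset_iff.mpr hw) ⟨w, Finset.mem_singleton_self w⟩
    have h0 : Subsingleton (reducedHomology R X 0) :=
      hCM.2.1.2 0 (by push_cast; omega)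
    have hconn := conn_of_H0 h0 hvf hwf
    suffices H : ∀ w, Relation.ReflTransGen (fun a b => ({a, b} : Finset V) ∈ X.faces) v w →
        ∀ G, X.IsFacet G → w ∈ G → Relation.ReflTransGen X.Adjacent F G from
      H w hconn G hG hw
    intro w hconn'
    induction hconn' with
    | refl => intro G hG hwG; exact hsv F G hF hG v hv hwG
    | @tail b c hvb hbc ih2 =>
      intro G hG hcG
      obtain ⟨H, hHfac, hsub⟩ := exists_facet_ge hCM.1.1 hbc
      have hbH : b ∈ H := hsub (Finset.mem_insert_self b {c})
      have hcH : c ∈ H := hsub (Finset.mem_insert_of_mem (Finset.mem_singleton_self c))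
      exact (ih2 H hHfac hbH).trans (hsv H G hHfac hG c hcH hcG)

end AbsSimplicialComplex

end Proofs

/-- every Cohen–Macaulay complex (over a field or `ℤ`) is pure and a
chamber complex. -/
theorem statement6 {V : Type u} [DecidableEq V] (R : Type) [CommRing R]
    (hR : IsField R ∨ Nonempty (R ≃+* ℤ)) (X : AbsSimplicialComplex V) (d : ℕ)
    (hCM : AbsSimplicialComplex.IsCM R X d) :
    X.IsPure d ∧ X.IsChamberComplex := by
  have hnt : Nontrivial R := by
    rcases hR with h | he
    · obtain ⟨x, y, hxy⟩ := h.exists_pair_ne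
      exact ⟨x, y, hxy⟩
    · obtain ⟨e⟩ := he
      refine ⟨e.symm 0, e.symm 1, fun h => ?_⟩
      have := e.symm.injective h
      norm_num at this
  exact ⟨AbsSimplicialComplex.isPure_of_CM hCM,
    AbsSimplicialComplex.chamber_of_CM d X hCM⟩
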